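/- arXiv:1406.6656 — 4 statements merged into one kernel-verified Lean document; each statement's English description precedes it below -/
import Mathlib

section
/- Let a, b ∈ ℝ^d with aᵢ < bᵢ for each i, and let Ω = Πᵢ [aᵢ, bᵢ] be the corresponding closed box. Let u : ℝ^d → ℝ^d be continuous on Ω and differentiable on its interior with integrable divergence, let D be a measurable subset of the interior of Ω whose topological frontier has Lebesgue measure zero, and let C₁, C₂ ∈ ℝ be such that ∇·u(x) = C₁ for x ∈ D and ∇·u(x) = C₂ for x in the interior of Ω minus the closure of D. Then the outward flux of u through ∂Ω satisfies Σᵢ ( ∫_{face xᵢ = bᵢ} uᵢ dS − ∫_{face xᵢ = aᵢ} uᵢ dS ) = (C₁ − C₂)·vol(D) + C₂·vol(Ω). -/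
open MeasureTheory

/-- The divergence `∇·u = Σᵢ ∂uᵢ/∂xᵢ` (trace of the Jacobian) of a vector field
`u : ℝ^d → ℝ^d`. -/
noncomputable def vectorDivergence {d : ℕ}
    (u : (Fin d → ℝ) → (Fin d → ℝ)) (x : Fin d → ℝ) : ℝ :=
  ∑ i, fderiv ℝ u x (Pi.single i 1) i

theorem flux_through_box_boundary {n : ℕ} (a b : Fin (n + 1) → ℝ)
    (hab : ∀ i, a i < b i)
    (u : (Fin (n + 1) → ℝ) → (Fin (n + 1) → ℝ))
    (hcont : ContinuousOn u (Set.Icc a b))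
    (hdiff : ∀ x ∈ interior (Set.Icc a b), DifferentiableAt ℝ u x)
    (hint : IntegrableOn (vectorDivergence u) (Set.Icc a b) volume)
    (D : Set (Fin (n + 1) → ℝ)) (hDmeas : MeasurableSet D)
    (hDsub : D ⊆ interior (Set.Icc a b))
    (hfrontier : volume (frontier D) = 0)
    (C₁ C₂ : ℝ)
    (h₁ : ∀ x ∈ D, vectorDivergence u x = C₁)
    (h₂ : ∀ x ∈ interior (Set.Icc a b) \ closure D, vectorDivergence u x = C₂) :
    (∑ i : Fin (n + 1),
        ((∫ x in Set.Icc (a ∘ i.succAbove) (b ∘ i.succAbove),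
            u (i.insertNth (b i) x) i) -
         (∫ x in Set.Icc (a ∘ i.succAbove) (b ∘ i.succAbove),
            u (i.insertNth (a i) x) i))) =
      (C₁ - C₂) * (volume D).toReal + C₂ * (volume (Set.Icc a b)).toReal := by
  have hIcc : Set.Icc a b = Set.pi Set.univ fun i => Set.Icc (a i) (b i) :=
    (Set.pi_univ_Icc a b).symm
  have hint' : interior (Set.Icc a b) = Set.pi Set.univ fun i => Set.Ioo (a i) (b i) := by
    rw [hIcc, interior_pi_set Set.finite_univ]
    simp [interior_Icc]
  have key := MeasureTheory.integral_divergence_of_hasFDerivAt_off_countable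
    (a := a) (b := b) (fun i => (hab i).le) u (fun x => fderiv ℝ u x) ∅
    Set.countable_empty hcont
    (fun x hx => (hdiff x (by rw [hint']; exact hx.1)).hasFDerivAt)
    hint
  rw [← key]
  set I := interior (Set.Icc a b) with hIdef
  have hImeas : MeasurableSet I := isOpen_interior.measurableSet
  have hvolI : volume I = volume (Set.Icc a b) := by
    rw [hint', Real.volume_pi_Ioo, Real.volume_Icc_pi]
  have hfin : volume (Set.Icc a b) ≠ ⊤ := by
    rw [Real.volume_Icc_pi]
    exact (ENNReal.prod_lt_top fun i _ => ENNReal.ofReal_lt_top).ne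
  have hIfin : volume I ≠ ⊤ := by rw [hvolI]; exact hfin
  have hdiffnull : volume (Set.Icc a b \ I) = 0 := by
    rw [measure_diff interior_subset hImeas.nullMeasurableSet hIfin, hvolI, tsub_self]
  have haeI : Set.Icc a b =ᵐ[volume] I := by
    refine MeasureTheory.ae_eq_set.2 ⟨hdiffnull, ?_⟩
    simp [Set.diff_eq_empty.2 (show I ⊆ Set.Icc a b from interior_subset)]
  have hDfin : volume D ≠ ⊤ := ne_top_of_le_ne_top hIfin (measure_mono hDsub)
  have hclD : volume (closure D \ D) = 0 :=
    measure_mono_null (Set.diff_subset_diff_right interior_subset) hfrontier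
  have hintI : IntegrableOn (vectorDivergence u) I volume := hint.mono_set interior_subset
  have hsplit : I = D ∪ (I \ D) := (Set.union_diff_cancel hDsub).symm
  have haeID : (I \ D : Set _) =ᵐ[volume] (I \ closure D : Set _) := by
    refine MeasureTheory.ae_eq_set.2
      ⟨measure_mono_null (fun x hx => ?_) hclD, measure_mono_null (fun x hx => ?_) hclD⟩
    · exact ⟨by_contra fun h => hx.2 ⟨hx.1.1, h⟩, hx.1.2⟩
    · exact (hx.1.2 (subset_closure (by_contra fun h => hx.2 ⟨hx.1.1, h⟩))).elim
  have hvolID : volume (I \ D) = volume I - volume D := by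
    rw [measure_diff hDsub hDmeas.nullMeasurableSet hDfin]
  calc ∫ x in Set.Icc a b, ∑ i, fderiv ℝ u x (Pi.single i 1) i
      = ∫ x in I, vectorDivergence u x := setIntegral_congr_set haeI
    _ = (∫ x in D, vectorDivergence u x) + ∫ x in I \ D, vectorDivergence u x := by
        nth_rewrite 1 [hsplit]
        exact setIntegral_union Set.disjoint_sdiff_right (hImeas.diff hDmeas)
          (hintI.mono_set hDsub) (hintI.mono_set Set.diff_subset)
    _ = (∫ _ in D, C₁) + ∫ x in I \ closure D, vectorDivergence u x := by
        rw [setIntegral_congr_fun hDmeas h₁, setIntegral_congr_set haeID]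
    _ = C₁ * (volume D).toReal + C₂ * (volume (I \ closure D)).toReal := by
        rw [setIntegral_congr_fun (hImeas.diff isClosed_closure.measurableSet) h₂]
        simp [mul_comm, Measure.real_def]
    _ = C₁ * (volume D).toReal + C₂ * ((volume (Set.Icc a b)).toReal - (volume D).toReal) := by
        rw [← measure_congr haeID, hvolID, hvolI,
          ENNReal.toReal_sub_of_le (hvolI ▸ measure_mono hDsub) hfin]
    _ = (C₁ - C₂) * (volume D).toReal + C₂ * (volume (Set.Icc a b)).toReal := by ring
end

section
/- Let U ⊆ ℝ^d be open and connected, let φ : ℝ^d → ℝ be three times continuously differentiable on U, and let λ, μ ∈ ℝ. Suppose the matrix-valued field σ(x) = λ·Δφ(x)·I + 2μ·Hess φ(x) is divergence-free on U, i.e. Σⱼ ∂σᵢⱼ/∂xⱼ = 0 on U for each i. Then the function (λ+2μ)·Δφ is constant on U. -/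
/-- Partial derivative `∂f/∂xᵢ` of a scalar function on `ℝ^d`. -/
noncomputable def pderiv' {d : ℕ} (i : Fin d)
    (f : EuclideanSpace ℝ (Fin d) → ℝ) (x : EuclideanSpace ℝ (Fin d)) : ℝ :=
  fderiv ℝ f x (EuclideanSpace.single i 1)

/-- The Laplacian `Δf = Σᵢ ∂²f/∂xᵢ²` of a scalar function on `ℝ^d`. -/
noncomputable def laplacian' {d : ℕ}
    (f : EuclideanSpace ℝ (Fin d) → ℝ) (x : EuclideanSpace ℝ (Fin d)) : ℝ :=
  ∑ i, pderiv' i (pderiv' i f) x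

/-- The Hessian matrix `(Hess f)ᵢⱼ = ∂²f/∂xᵢ∂xⱼ` of a scalar function on `ℝ^d`. -/
noncomputable def hessian {d : ℕ}
    (f : EuclideanSpace ℝ (Fin d) → ℝ) (x : EuclideanSpace ℝ (Fin d)) :
    Matrix (Fin d) (Fin d) ℝ :=
  fun i j => pderiv' i (pderiv' j f) x

/-- The stress field `σ = λ·(Δφ)·I + 2μ·Hess φ` associated to the displacement `∇φ`
by isotropic Hooke's law with Lamé modulus `λ` and shear modulus `μ`. -/
noncomputable def potentialStress {d : ℕ} (lam mu : ℝ)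
    (φ : EuclideanSpace ℝ (Fin d) → ℝ) (x : EuclideanSpace ℝ (Fin d)) :
    Matrix (Fin d) (Fin d) ℝ :=
  (lam * laplacian' φ x) • (1 : Matrix (Fin d) (Fin d) ℝ) + (2 * mu) • hessian φ x


variable {d : ℕ}

local notation "E" => EuclideanSpace ℝ (Fin d)

noncomputable def ee (i : Fin d) : EuclideanSpace ℝ (Fin d) := EuclideanSpace.single i 1

lemma fderiv_apply_const {G : Type*} [NormedAddCommGroup G] [NormedSpace ℝ G]
    {F : EuclideanSpace ℝ (Fin d) → (EuclideanSpace ℝ (Fin d) →L[ℝ] G)}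
    {x : EuclideanSpace ℝ (Fin d)} (hF : DifferentiableAt ℝ F x)
    (v w : EuclideanSpace ℝ (Fin d)) :
    fderiv ℝ (fun y => F y v) x w = fderiv ℝ F x w v := by
  rw [fderiv_clm_apply hF (differentiableAt_const v)]
  simp

section
variable {U : Set (EuclideanSpace ℝ (Fin d))} (hU : IsOpen U)
  {φ : EuclideanSpace ℝ (Fin d) → ℝ} (hφ : ContDiffOn ℝ 3 φ U)
  {x : EuclideanSpace ℝ (Fin d)} (hx : x ∈ U)

include hU hφ hx

lemma hc3 : ContDiffAt ℝ 3 φ x := hφ.contDiffAt (hU.mem_nhds hx)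

lemma hc2 : ContDiffAt ℝ 2 (fderiv ℝ φ) x :=
  (hc3 hU hφ hx).fderiv_right (by norm_num)

lemma hc1 : ContDiffAt ℝ 1 (fderiv ℝ (fderiv ℝ φ)) x :=
  (hc2 hU hφ hx).fderiv_right (by norm_num)

lemma hA : DifferentiableAt ℝ (fderiv ℝ (fderiv ℝ φ)) x :=
  (hc1 hU hφ hx).differentiableAt (by norm_num)

lemma pd2 (i j : Fin d) :
    pderiv' i (pderiv' j φ) x = fderiv ℝ (fderiv ℝ φ) x (ee i) (ee j) := by
  unfold pderiv'
  exact fderiv_apply_const ((hc2 hU hφ hx).differentiableAt (by norm_num)) _ _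
end

section more
variable {U : Set (EuclideanSpace ℝ (Fin d))} (hU : IsOpen U)
  {φ : EuclideanSpace ℝ (Fin d) → ℝ} (hφ : ContDiffOn ℝ 3 φ U)
  {x : EuclideanSpace ℝ (Fin d)} (hx : x ∈ U)

include hU hφ hx

lemma hHdiff (i j : Fin d) :
    DifferentiableAt ℝ (fun y => pderiv' i (pderiv' j φ) y) x := by
  have hev : (fun y => pderiv' i (pderiv' j φ) y)
      =ᶠ[nhds x] fun y => fderiv ℝ (fderiv ℝ φ) y (ee i) (ee j) := by
    filter_upwards [hU.mem_nhds hx] with y hy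
    exact pd2 hU hφ hy i j
  have hd : DifferentiableAt ℝ (fun y => fderiv ℝ (fderiv ℝ φ) y (ee i) (ee j)) x :=
    ((hA hU hφ hx).clm_apply (differentiableAt_const _)).clm_apply (differentiableAt_const _)
  exact hd.congr_of_eventuallyEq hev

lemma pd3 (k i j : Fin d) :
    pderiv' k (fun y => pderiv' i (pderiv' j φ) y) x
      = fderiv ℝ (fderiv ℝ (fderiv ℝ φ)) x (ee k) (ee i) (ee j) := by
  have hev : (fun y => pderiv' i (pderiv' j φ) y)
      =ᶠ[nhds x] fun y => fderiv ℝ (fderiv ℝ φ) y (ee i) (ee j) := by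
    filter_upwards [hU.mem_nhds hx] with y hy
    exact pd2 hU hφ hy i j
  have hF' : DifferentiableAt ℝ (fun y => fderiv ℝ (fderiv ℝ φ) y (ee i)) x :=
    (hA hU hφ hx).clm_apply (differentiableAt_const _)
  calc pderiv' k (fun y => pderiv' i (pderiv' j φ) y) x
      = fderiv ℝ (fun y => fderiv ℝ (fderiv ℝ φ) y (ee i) (ee j)) x (ee k) := by
        show fderiv ℝ (fun y => pderiv' i (pderiv' j φ) y) x (EuclideanSpace.single k 1) = _
        rw [hev.fderiv_eq]; rfl
    _ = fderiv ℝ (fun y => fderiv ℝ (fderiv ℝ φ) y (ee i)) x (ee k) (ee j) := by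
        rw [fderiv_apply_const hF' (ee j) (ee k)]
    _ = fderiv ℝ (fderiv ℝ (fderiv ℝ φ)) x (ee k) (ee i) (ee j) := by
        rw [fderiv_apply_const (hA hU hφ hx) (ee i) (ee k)]

lemma tsym (k i j : Fin d) :
    fderiv ℝ (fderiv ℝ (fderiv ℝ φ)) x (ee k) (ee i) (ee j)
      = fderiv ℝ (fderiv ℝ (fderiv ℝ φ)) x (ee i) (ee k) (ee j) := by
  have h := (hc2 hU hφ hx).isSymmSndFDerivAt (by simp)
  rw [h (ee k) (ee i)]

lemma hLapdiff : DifferentiableAt ℝ (laplacian' φ) x := by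
  unfold laplacian'
  exact DifferentiableAt.fun_sum fun j _ => hHdiff hU hφ hx j j

lemma pdLap (i : Fin d) :
    pderiv' i (laplacian' φ) x
      = ∑ j, fderiv ℝ (fderiv ℝ (fderiv ℝ φ)) x (ee i) (ee j) (ee j) := by
  show fderiv ℝ (laplacian' φ) x (EuclideanSpace.single i 1) = _
  have hrfl : laplacian' φ = fun y => ∑ j, pderiv' j (pderiv' j φ) y := rfl
  rw [hrfl, fderiv_fun_sum fun j _ => hHdiff hU hφ hx j j, ContinuousLinearMap.sum_apply]
  exact Finset.sum_congr rfl fun j _ => pd3 hU hφ hx i j j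

end more

section main
variable {U : Set (EuclideanSpace ℝ (Fin d))} (hU : IsOpen U)
  {φ : EuclideanSpace ℝ (Fin d) → ℝ} (hφ : ContDiffOn ℝ 3 φ U)
  {x : EuclideanSpace ℝ (Fin d)} (hx : x ∈ U) (lam mu : ℝ)

include hU hφ hx

lemma divkey
    (hdiv : (∀ i : Fin d,
      (∑ j, pderiv' j (fun y => potentialStress lam mu φ y i j) x) = 0))
    (i : Fin d) :
    (lam + 2 * mu) * pderiv' i (laplacian' φ) x = 0 := by
  have h0 := hdiv i
  have hsum : ∀ j ∈ Finset.univ, pderiv' j (fun y => potentialStress lam mu φ y i j) x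
      = lam * ((1 : Matrix (Fin d) (Fin d) ℝ) i j) * pderiv' j (laplacian' φ) x
        + 2 * mu * fderiv ℝ (fderiv ℝ (fderiv ℝ φ)) x (ee i) (ee j) (ee j) := by
    intro j _
    have hfun : (fun y => potentialStress lam mu φ y i j)
        = fun y => (lam * ((1 : Matrix (Fin d) (Fin d) ℝ) i j)) * laplacian' φ y
            + (2 * mu) * pderiv' i (pderiv' j φ) y := by
      funext y
      simp only [potentialStress, hessian, Matrix.add_apply, Matrix.smul_apply, smul_eq_mul]
      ring
    rw [hfun]
    show fderiv ℝ _ x (EuclideanSpace.single j 1) = _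
    rw [fderiv_fun_add ((hLapdiff hU hφ hx).const_mul _) ((hHdiff hU hφ hx i j).const_mul _),
      fderiv_const_mul (hLapdiff hU hφ hx), fderiv_const_mul (hHdiff hU hφ hx i j)]
    simp only [ContinuousLinearMap.add_apply, ContinuousLinearMap.smul_apply, smul_eq_mul]
    have h1 : fderiv ℝ (fun y => pderiv' i (pderiv' j φ) y) x (EuclideanSpace.single j 1)
        = fderiv ℝ (fderiv ℝ (fderiv ℝ φ)) x (ee i) (ee j) (ee j) := by
      rw [show fderiv ℝ (fun y => pderiv' i (pderiv' j φ) y) x (EuclideanSpace.single j 1)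
          = pderiv' j (fun y => pderiv' i (pderiv' j φ) y) x from rfl,
        pd3 hU hφ hx j i j, tsym hU hφ hx j i j]
    rw [h1]
    rfl
  rw [Finset.sum_congr rfl hsum, Finset.sum_add_distrib] at h0
  have hS := pdLap hU hφ hx i
  have hfirst : ∑ j, lam * ((1 : Matrix (Fin d) (Fin d) ℝ) i j) * pderiv' j (laplacian' φ) x
      = lam * pderiv' i (laplacian' φ) x := by
    simp [Matrix.one_apply, mul_ite, ite_mul, Finset.sum_ite_eq]
  rw [hfirst] at h0
  rw [← Finset.mul_sum, ← hS] at h0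
  nlinarith [h0]

end main

set_option maxHeartbeats 2000000 in
theorem constant_of_divergence_free_stress {d : ℕ}
    (U : Set (EuclideanSpace ℝ (Fin d)))
    (hU : IsOpen U) (hUconn : IsConnected U)
    (φ : EuclideanSpace ℝ (Fin d) → ℝ)
    (hφ : ContDiffOn ℝ 3 φ U) (lam mu : ℝ)
    (hdivfree : ∀ x ∈ U, ∀ i : Fin d,
      (∑ j, pderiv' j (fun y => potentialStress lam mu φ y i j) x) = 0) :
    ∀ x ∈ U, ∀ y ∈ U,
      (lam + 2 * mu) * laplacian' φ x = (lam + 2 * mu) * laplacian' φ y := by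
  intro x hx y hy
  set g : EuclideanSpace ℝ (Fin d) → ℝ := fun z => (lam + 2 * mu) * laplacian' φ z with hg
  have hgdiff : ∀ z ∈ U, DifferentiableAt ℝ g z :=
    fun z hz => (hLapdiff hU hφ hz).const_mul _
  have hgfd : ∀ z ∈ U, fderiv ℝ g z = 0 := by
    intro z hz
    have hap : ∀ i : Fin d, fderiv ℝ g z (EuclideanSpace.single i 1) = 0 := by
      intro i
      rw [hg, fderiv_const_mul (hLapdiff hU hφ hz)]
      simp only [ContinuousLinearMap.smul_apply, smul_eq_mul]
      exact divkey hU hφ hz lam mu (hdivfree z hz) i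
    refine ContinuousLinearMap.coe_injective ?_
    refine Module.Basis.ext (EuclideanSpace.basisFun (Fin d) ℝ).toBasis fun i => ?_
    simp only [OrthonormalBasis.coe_toBasis, EuclideanSpace.basisFun_apply,
      ContinuousLinearMap.coe_coe, LinearMap.zero_apply, ContinuousLinearMap.coe_zero]
    exact hap i
  have key : ∀ z ∈ U, ∃ r > 0, Metric.ball z r ⊆ U ∧ ∀ w ∈ Metric.ball z r, g w = g z := by
    intro z hz
    obtain ⟨r, hr, hball⟩ := Metric.isOpen_iff.1 hU z hz
    refine ⟨r, hr, hball, fun w hw => ?_⟩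
    refine (convex_ball z r).is_const_of_fderivWithin_eq_zero (𝕜 := ℝ)
      (fun p hp => (hgdiff p (hball hp)).differentiableWithinAt) ?_ hw (Metric.mem_ball_self hr)
    intro p hp
    rw [fderivWithin_of_isOpen Metric.isOpen_ball hp]
    exact hgfd p (hball hp)
  haveI : PreconnectedSpace U := Subtype.preconnectedSpace hUconn.isPreconnected
  have hloc : IsLocallyConstant (fun p : U => g p.1) := by
    rw [IsLocallyConstant.iff_exists_open]
    rintro ⟨z, hz⟩
    obtain ⟨r, hr, hball, hconst⟩ := key z hz
    refine ⟨Subtype.val ⁻¹' Metric.ball z r,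
      Metric.isOpen_ball.preimage continuous_subtype_val, ?_, ?_⟩
    · show z ∈ Metric.ball z r
      exact Metric.mem_ball_self hr
    · rintro ⟨w, hw⟩ hmem
      show g w = g z
      exact hconst w hmem
  have hfinal : g x = g y := hloc.apply_eq_of_isPreconnected isPreconnected_univ
    (Set.mem_univ (⟨x, hx⟩ : U)) (Set.mem_univ (⟨y, hy⟩ : U))
  exact hfinal
end

section
/- Let U ⊆ ℂ be open, let λ, μ ∈ ℝ with μ ≠ 0 and λ + μ ≠ 0, set κ = (λ + 3μ)/(λ + μ), and let φ, ψ : U → ℂ be holomorphic. Define w : U → ℂ by 2μ·w(z) = κ·φ(z) − z·conj(φ′(z)) − conj(ψ(z)), identified with the planar vector field (Re w, Im w). Then w satisfies the Lamé equations on U: −(λ+μ)∇(∇·w) − μΔw = 0 at every point of U. -/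
open Complex

/-- Partial derivative in the `x`-direction of a scalar function on `ℝ² = ℂ`. -/
noncomputable def pdx (f : ℂ → ℝ) (z : ℂ) : ℝ := fderiv ℝ f z 1

/-- Partial derivative in the `y`-direction of a scalar function on `ℝ² = ℂ`. -/
noncomputable def pdy (f : ℂ → ℝ) (z : ℂ) : ℝ := fderiv ℝ f z Complex.I

/-- The divergence `∇·w = ∂(Re w)/∂x + ∂(Im w)/∂y` of the planar vector field
`(Re w, Im w)` associated to `w : ℂ → ℂ`. -/
noncomputable def div2 (w : ℂ → ℂ) (z : ℂ) : ℝ :=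
  pdx (fun y => (w y).re) z + pdy (fun y => (w y).im) z

/-- The Laplacian `Δf = ∂²f/∂x² + ∂²f/∂y²` of a scalar function on `ℝ² = ℂ`. -/
noncomputable def lap2 (f : ℂ → ℝ) (z : ℂ) : ℝ :=
  pdx (pdx f) z + pdy (pdy f) z

/-- The gradient `(∂f/∂x, ∂f/∂y)` of a scalar function on `ℝ² = ℂ`, as a complex number. -/
noncomputable def grad2 (f : ℂ → ℝ) (z : ℂ) : ℂ :=
  ⟨pdx f z, pdy f z⟩

/-- The componentwise Laplacian of the planar vector field `(Re w, Im w)`. -/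
noncomputable def vecLap2 (w : ℂ → ℂ) (z : ℂ) : ℂ :=
  ⟨lap2 (fun y => (w y).re) z, lap2 (fun y => (w y).im) z⟩

/-- The Lamé operator `L w = −(λ+μ)∇(∇·w) − μΔw` acting on the planar vector field
`(Re w, Im w)`. -/
noncomputable def lame2 (lam mu : ℝ) (w : ℂ → ℂ) (z : ℂ) : ℂ :=
  (-(lam + mu)) • grad2 (div2 w) z + (-mu) • vecLap2 w z


noncomputable def conjCLM : ℂ →L[ℝ] ℂ := Complex.conjCLE.toContinuousLinearMap

@[simp] lemma conjCLM_apply (v : ℂ) : conjCLM v = (starRingEnd ℂ) v := rfl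

lemma holoFD {f : ℂ → ℂ} {f' z : ℂ} (h : HasDerivAt f f' z) :
    HasFDerivAt f (f' • (1 : ℂ →L[ℝ] ℂ)) z := by
  have h2 := h.hasFDerivAt.restrictScalars ℝ
  refine h2.congr_fderiv ?_
  ext v
  simp [mul_comm]

lemma KMmaster {A B C : ℂ → ℂ} {a' b' c' : ℂ} {z : ℂ}
    (hA : HasDerivAt A a' z) (hB : HasDerivAt B b' z) (hC : HasDerivAt C c' z) :
    HasFDerivAt (fun y => A y + y * (starRingEnd ℂ) (B y) + (starRingEnd ℂ) (C y))
      ((a' + (starRingEnd ℂ) (B z)) • (1 : ℂ →L[ℝ] ℂ)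
        + (z * (starRingEnd ℂ) b' + (starRingEnd ℂ) c') • conjCLM) z := by
  have hcb : HasFDerivAt (fun y => (starRingEnd ℂ) (B y))
      (conjCLM.comp (b' • (1 : ℂ →L[ℝ] ℂ))) z :=
    conjCLM.hasFDerivAt.comp z (holoFD hB)
  have hcc : HasFDerivAt (fun y => (starRingEnd ℂ) (C y))
      (conjCLM.comp (c' • (1 : ℂ →L[ℝ] ℂ))) z :=
    conjCLM.hasFDerivAt.comp z (holoFD hC)
  have hid : HasFDerivAt (fun y : ℂ => y) (ContinuousLinearMap.id ℝ ℂ) z := hasFDerivAt_id z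
  have hmul := hid.mul hcb
  have hsum := ((holoFD hA).add hmul).add hcc
  refine HasFDerivAt.congr_fderiv
    (f := fun y => A y + y * (starRingEnd ℂ) (B y) + (starRingEnd ℂ) (C y)) hsum ?_
  ext v
  simp [mul_comm, map_mul]
  ring

lemma fdre {w : ℂ → ℂ} {M : ℂ →L[ℝ] ℂ} {z : ℂ} (h : HasFDerivAt w M z) (v : ℂ) :
    fderiv ℝ (fun y => (w y).re) z v = (M v).re := by
  have h2 : HasFDerivAt (fun y => (w y).re) (Complex.reCLM.comp M) z :=
    Complex.reCLM.hasFDerivAt.comp z h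
  rw [h2.fderiv]; rfl

lemma fdim {w : ℂ → ℂ} {M : ℂ →L[ℝ] ℂ} {z : ℂ} (h : HasFDerivAt w M z) (v : ℂ) :
    fderiv ℝ (fun y => (w y).im) z v = (M v).im := by
  have h2 : HasFDerivAt (fun y => (w y).im) (Complex.imCLM.comp M) z :=
    Complex.imCLM.hasFDerivAt.comp z h
  rw [h2.fderiv]; rfl

lemma fd_congr {U : Set ℂ} (hU : IsOpen U) {z : ℂ} (hz : z ∈ U) {f g : ℂ → ℝ}
    (h : ∀ y ∈ U, f y = g y) : fderiv ℝ f z = fderiv ℝ g z :=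
  Filter.EventuallyEq.fderiv_eq (by filter_upwards [hU.mem_nhds hz] using h)

@[simp] lemma CLMeval (a b v : ℂ) :
    ((a • (1 : ℂ →L[ℝ] ℂ) + b • conjCLM) v) = a * v + b * (starRingEnd ℂ) v := by
  simp

theorem kolosov_muskhelishvili_solution (U : Set ℂ) (hU : IsOpen U)
    (lam mu : ℝ) (hmu : mu ≠ 0) (hlm : lam + mu ≠ 0)
    (φ ψ : ℂ → ℂ) (hφ : DifferentiableOn ℂ φ U) (hψ : DifferentiableOn ℂ ψ U)
    (κ : ℝ) (hκ : κ = (lam + 3 * mu) / (lam + mu))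
    (w : ℂ → ℂ)
    (hw : ∀ z ∈ U, (2 * mu : ℂ) * w z =
      (κ : ℂ) * φ z - z * (starRingEnd ℂ) (deriv φ z) - (starRingEnd ℂ) (ψ z)) :
    ∀ z ∈ U, lame2 lam mu w z = 0 := by
  intro z hz
  have hφa : AnalyticOnNhd ℂ φ U := hφ.analyticOnNhd hU
  have hψa : AnalyticOnNhd ℂ ψ U := hψ.analyticOnNhd hU
  set φ1 := deriv φ with hφ1def
  set φ2 := deriv φ1 with hφ2def
  set φ3 := deriv φ2 with hφ3def
  set ψ1 := deriv ψ with hψ1def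
  set ψ2 := deriv ψ1 with hψ2def
  have hφ1a : AnalyticOnNhd ℂ φ1 U := hφa.deriv
  have hφ2a : AnalyticOnNhd ℂ φ2 U := hφ1a.deriv
  have hψ1a : AnalyticOnNhd ℂ ψ1 U := hψa.deriv
  have hdφ : ∀ y ∈ U, HasDerivAt φ (φ1 y) y := fun y hy => ((hφa y hy).differentiableAt).hasDerivAt
  have hdφ1 : ∀ y ∈ U, HasDerivAt φ1 (φ2 y) y := fun y hy => ((hφ1a y hy).differentiableAt).hasDerivAt
  have hdφ2 : ∀ y ∈ U, HasDerivAt φ2 (φ3 y) y := fun y hy => ((hφ2a y hy).differentiableAt).hasDerivAt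
  have hdψ : ∀ y ∈ U, HasDerivAt ψ (ψ1 y) y := fun y hy => ((hψa y hy).differentiableAt).hasDerivAt
  have hdψ1 : ∀ y ∈ U, HasDerivAt ψ1 (ψ2 y) y := fun y hy => ((hψ1a y hy).differentiableAt).hasDerivAt
  set mr : ℝ := (2*mu)⁻¹ with hmrdef
  set pr : ℝ := mr * κ with hprdef
  set qr : ℝ := -mr with hqrdef
  set A : ℂ → ℂ := fun y => (pr:ℂ) * φ y with hAdef
  set B : ℂ → ℂ := fun y => (qr:ℂ) * φ1 y with hBdef
  set C : ℂ → ℂ := fun y => (qr:ℂ) * ψ y with hCdef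
  have h2mu : (2 * (mu:ℂ)) ≠ 0 := by simp [hmu]
  have hwW : ∀ y ∈ U, w y = A y + y * (starRingEnd ℂ) (B y) + (starRingEnd ℂ) (C y) := by
    intro y hy
    apply mul_left_cancel₀ h2mu
    rw [hw y hy]
    simp only [hAdef, hBdef, hCdef, map_mul, Complex.conj_ofReal, hprdef, hqrdef, hmrdef]
    push_cast
    field_simp [Complex.ofReal_ne_zero.mpr hmu]
    ring
  set A1 : ℂ → ℂ := fun y => (pr:ℂ) * φ1 y with hA1def
  set B1 : ℂ → ℂ := fun y => (qr:ℂ) * φ2 y with hB1def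
  set C1 : ℂ → ℂ := fun y => (qr:ℂ) * φ1 y + (qr:ℂ) * ψ1 y with hC1def
  set A2 : ℂ → ℂ := fun y => Complex.I * ((pr:ℂ) * φ1 y) with hA2def
  set B2 : ℂ → ℂ := fun y => Complex.I * ((qr:ℂ) * φ2 y) with hB2def
  set C2 : ℂ → ℂ := fun y => Complex.I * ((qr:ℂ) * ψ1 y) - Complex.I * ((qr:ℂ) * φ1 y) with hC2def
  set A3 : ℂ → ℂ := fun y => 2 * ((pr:ℂ) * φ1 y) with hA3def
  set B3 : ℂ → ℂ := fun _ => (0:ℂ) with hB3def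
  set C3 : ℂ → ℂ := fun y => 2 * ((qr:ℂ) * φ1 y) with hC3def
  have hMw : ∀ y ∈ U, HasFDerivAt (fun t => A t + t * (starRingEnd ℂ) (B t) + (starRingEnd ℂ) (C t))
      ((((pr:ℂ) * φ1 y) + (starRingEnd ℂ) (B y)) • (1 : ℂ →L[ℝ] ℂ)
        + (y * (starRingEnd ℂ) ((qr:ℂ) * φ2 y) + (starRingEnd ℂ) ((qr:ℂ) * ψ1 y)) • conjCLM) y :=
    fun y hy => KMmaster ((hdφ y hy).const_mul (pr:ℂ)) ((hdφ1 y hy).const_mul (qr:ℂ))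
      ((hdψ y hy).const_mul (qr:ℂ))
  have key1 : ∀ y ∈ U, pdx (fun t => (w t).re) y
      = (A1 y + y * (starRingEnd ℂ) (B1 y) + (starRingEnd ℂ) (C1 y)).re := by
    intro y hy
    have hc := fd_congr hU hy (f := fun t => (w t).re)
      (g := fun t => (A t + t * (starRingEnd ℂ) (B t) + (starRingEnd ℂ) (C t)).re)
      (fun t ht => by show (w t).re = _; rw [hwW t ht])
    show fderiv ℝ (fun t => (w t).re) y 1 = _
    rw [hc]
    refine (fdre (hMw y hy) 1).trans ?_
    rw [CLMeval]
    apply congrArg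
    simp only [hA1def, hB1def, hC1def, hBdef, map_add, map_mul, Complex.conj_ofReal, map_one]
    ring
  have key2 : ∀ y ∈ U, pdx (fun t => (w t).im) y
      = (A1 y + y * (starRingEnd ℂ) (B1 y) + (starRingEnd ℂ) (C1 y)).im := by
    intro y hy
    have hc := fd_congr hU hy (f := fun t => (w t).im)
      (g := fun t => (A t + t * (starRingEnd ℂ) (B t) + (starRingEnd ℂ) (C t)).im)
      (fun t ht => by show (w t).im = _; rw [hwW t ht])
    show fderiv ℝ (fun t => (w t).im) y 1 = _
    rw [hc]
    refine (fdim (hMw y hy) 1).trans ?_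
    rw [CLMeval]
    apply congrArg
    simp only [hA1def, hB1def, hC1def, hBdef, map_add, map_mul, Complex.conj_ofReal, map_one]
    ring
  have key3 : ∀ y ∈ U, pdy (fun t => (w t).re) y
      = (A2 y + y * (starRingEnd ℂ) (B2 y) + (starRingEnd ℂ) (C2 y)).re := by
    intro y hy
    have hc := fd_congr hU hy (f := fun t => (w t).re)
      (g := fun t => (A t + t * (starRingEnd ℂ) (B t) + (starRingEnd ℂ) (C t)).re)
      (fun t ht => by show (w t).re = _; rw [hwW t ht])
    show fderiv ℝ (fun t => (w t).re) y Complex.I = _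
    rw [hc]
    refine (fdre (hMw y hy) Complex.I).trans ?_
    rw [CLMeval]
    apply congrArg
    simp only [hA2def, hB2def, hC2def, hBdef, map_add, map_mul, map_sub, Complex.conj_ofReal,
      Complex.conj_I]
    ring
  have key4 : ∀ y ∈ U, pdy (fun t => (w t).im) y
      = (A2 y + y * (starRingEnd ℂ) (B2 y) + (starRingEnd ℂ) (C2 y)).im := by
    intro y hy
    have hc := fd_congr hU hy (f := fun t => (w t).im)
      (g := fun t => (A t + t * (starRingEnd ℂ) (B t) + (starRingEnd ℂ) (C t)).im)
      (fun t ht => by show (w t).im = _; rw [hwW t ht])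
    show fderiv ℝ (fun t => (w t).im) y Complex.I = _
    rw [hc]
    refine (fdim (hMw y hy) Complex.I).trans ?_
    rw [CLMeval]
    apply congrArg
    simp only [hA2def, hB2def, hC2def, hBdef, map_add, map_mul, map_sub, Complex.conj_ofReal,
      Complex.conj_I]
    ring
  have keydiv : ∀ y ∈ U, div2 w y
      = (A3 y + y * (starRingEnd ℂ) (B3 y) + (starRingEnd ℂ) (C3 y)).re := by
    intro y hy
    show pdx (fun t => (w t).re) y + pdy (fun t => (w t).im) y = _
    rw [key1 y hy, key4 y hy]
    simp only [hA1def, hB1def, hC1def, hA2def, hB2def, hC2def, hA3def, hB3def, hC3def]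
    simp [Complex.add_re, Complex.add_im, Complex.mul_re, Complex.mul_im]
    ring
  have hM1 := KMmaster ((hdφ1 z hz).const_mul (pr:ℂ)) ((hdφ2 z hz).const_mul (qr:ℂ))
    (((hdφ1 z hz).const_mul (qr:ℂ)).add ((hdψ1 z hz).const_mul (qr:ℂ)))
  have hM2 := KMmaster (((hdφ1 z hz).const_mul (pr:ℂ)).const_mul Complex.I)
    (((hdφ2 z hz).const_mul (qr:ℂ)).const_mul Complex.I)
    ((((hdψ1 z hz).const_mul (qr:ℂ)).const_mul Complex.I).sub
      (((hdφ1 z hz).const_mul (qr:ℂ)).const_mul Complex.I))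
  have hM3 := KMmaster (((hdφ1 z hz).const_mul (pr:ℂ)).const_mul (2:ℂ))
    (hasDerivAt_const z (0:ℂ))
    (((hdφ1 z hz).const_mul (qr:ℂ)).const_mul (2:ℂ))
  set V1 : ℂ := (pr:ℂ) * φ2 z + 2*((qr:ℂ) * (starRingEnd ℂ) (φ2 z))
      + z * ((qr:ℂ) * (starRingEnd ℂ) (φ3 z)) + (qr:ℂ) * (starRingEnd ℂ) (ψ2 z) with hV1
  set V2 : ℂ := -((pr:ℂ) * φ2 z) + 2*((qr:ℂ) * (starRingEnd ℂ) (φ2 z))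
      - z * ((qr:ℂ) * (starRingEnd ℂ) (φ3 z)) - (qr:ℂ) * (starRingEnd ℂ) (ψ2 z) with hV2
  set V3 : ℂ := 2*((pr:ℂ) * φ2 z) + 2*((qr:ℂ) * (starRingEnd ℂ) (φ2 z)) with hV3
  set V4 : ℂ := (2*((pr:ℂ) * φ2 z)) * Complex.I
      - (2*((qr:ℂ) * (starRingEnd ℂ) (φ2 z))) * Complex.I with hV4
  have e1 : pdx (pdx (fun t => (w t).re)) z = V1.re := by
    show fderiv ℝ (pdx (fun t => (w t).re)) z 1 = _
    rw [fd_congr hU hz key1]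
    refine (fdre hM1 1).trans ?_
    rw [CLMeval]
    apply congrArg
    simp only [hV1, hB1def, map_add, map_mul, Complex.conj_ofReal, map_one]
    ring
  have e2 : pdx (pdx (fun t => (w t).im)) z = V1.im := by
    show fderiv ℝ (pdx (fun t => (w t).im)) z 1 = _
    rw [fd_congr hU hz key2]
    refine (fdim hM1 1).trans ?_
    rw [CLMeval]
    apply congrArg
    simp only [hV1, hB1def, map_add, map_mul, Complex.conj_ofReal, map_one]
    ring
  have e3 : pdy (pdy (fun t => (w t).re)) z = V2.re := by
    show fderiv ℝ (pdy (fun t => (w t).re)) z Complex.I = _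
    rw [fd_congr hU hz key3]
    refine (fdre hM2 Complex.I).trans ?_
    rw [CLMeval]
    apply congrArg
    simp only [hV2, hB2def, map_add, map_mul, map_sub, Complex.conj_ofReal, Complex.conj_I]
    ring_nf
    simp only [Complex.I_sq]
    ring
  have e4 : pdy (pdy (fun t => (w t).im)) z = V2.im := by
    show fderiv ℝ (pdy (fun t => (w t).im)) z Complex.I = _
    rw [fd_congr hU hz key4]
    refine (fdim hM2 Complex.I).trans ?_
    rw [CLMeval]
    apply congrArg
    simp only [hV2, hB2def, map_add, map_mul, map_sub, Complex.conj_ofReal, Complex.conj_I]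
    ring_nf
    simp only [Complex.I_sq]
    ring
  have e5 : pdx (div2 w) z = V3.re := by
    show fderiv ℝ (div2 w) z 1 = _
    rw [fd_congr hU hz keydiv]
    refine (fdre hM3 1).trans ?_
    rw [CLMeval]
    apply congrArg
    simp only [hV3, hB3def, map_add, map_mul, map_zero, map_one, Complex.conj_ofReal, map_ofNat]
    ring
  have e6 : pdy (div2 w) z = V4.re := by
    show fderiv ℝ (div2 w) z Complex.I = _
    rw [fd_congr hU hz keydiv]
    refine (fdre hM3 Complex.I).trans ?_
    rw [CLMeval]
    apply congrArg
    simp only [hV4, hB3def, map_add, map_mul, map_zero, map_one, Complex.conj_ofReal,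
      Complex.conj_I, map_ofNat]
    ring
  have hsum : V1 + V2 = ((4*qr : ℝ):ℂ) * (starRingEnd ℂ) (φ2 z) := by
    rw [hV1, hV2]; push_cast; ring
  have r1 : V1.re + V2.re = 4*qr*(φ2 z).re := by
    rw [← Complex.add_re, hsum]
    simp [Complex.mul_re]
  have i1 : V1.im + V2.im = -(4*qr*(φ2 z).im) := by
    rw [← Complex.add_im, hsum]
    simp [Complex.mul_im]
  have r3 : V3.re = 2*pr*(φ2 z).re + 2*qr*(φ2 z).re := by
    rw [hV3]
    simp [Complex.mul_re, Complex.mul_im]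
    ring
  have r4 : V4.re = -(2*pr*(φ2 z).im) - 2*qr*(φ2 z).im := by
    rw [hV4]
    simp [Complex.mul_re, Complex.mul_im]
    ring
  have hk1 : (κ - 1) * (lam + mu) = 2 * mu := by
    rw [hκ]
    field_simp
    ring
  have hmain : lame2 lam mu w z =
      (-(lam+mu)) • (⟨V3.re, V4.re⟩ : ℂ) + (-mu) • (⟨V1.re + V2.re, V1.im + V2.im⟩ : ℂ) := by
    simp only [lame2, grad2, vecLap2, lap2]
    rw [e1, e2, e3, e4, e5, e6]
  rw [hmain]
  apply Complex.ext
  · simp only [Complex.add_re, Complex.smul_re, Complex.zero_re]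
    show -(lam+mu) • V3.re + (-mu) • (V1.re + V2.re) = 0
    rw [smul_eq_mul, smul_eq_mul, r1, r3, hprdef, hqrdef]
    linear_combination (-2*mr*(φ2 z).re) * hk1
  · simp only [Complex.add_im, Complex.smul_im, Complex.zero_im]
    show -(lam+mu) • V4.re + (-mu) • (V1.im + V2.im) = 0
    rw [smul_eq_mul, smul_eq_mul, i1, r4, hprdef, hqrdef]
    linear_combination (2*mr*(φ2 z).im) * hk1
end

section
/- Fix an integer n ≥ 0, a radius R > 0, and constants λ, μ ∈ ℝ. Let w(z) = conj(z)^{−(n+1)} on ℂ \ {0}, identified with the planar vector field (Re w, Im w). Then ∇·w = 0 on ℂ \ {0}, and for every z with |z| = R the traction of w on the circle of radius R satisfies σ(w)·n = −(2μ/R)·(n+1)·w(z), where n = z/R is the outward unit normal; that is, the traction vector at each boundary point equals −(2μ/R)(n+1) times the displacement vector at that point. -/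
open Complex

/-- The Jacobian matrix of the planar vector field `(Re w, Im w)`. -/
noncomputable def jac2 (w : ℂ → ℂ) (z : ℂ) : Matrix (Fin 2) (Fin 2) ℝ :=
  Matrix.of ![![pdx (fun y => (w y).re) z, pdy (fun y => (w y).re) z],
              ![pdx (fun y => (w y).im) z, pdy (fun y => (w y).im) z]]

/-- The stress `σ(w) = λ(∇·w)I + μ(∇w + (∇w)ᵀ)` of the planar vector field
`(Re w, Im w)`, with Lamé modulus `λ` and shear modulus `μ`. -/
noncomputable def stress2 (lam mu : ℝ) (w : ℂ → ℂ) (z : ℂ) :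
    Matrix (Fin 2) (Fin 2) ℝ :=
  (lam * div2 w z) • (1 : Matrix (Fin 2) (Fin 2) ℝ) + mu • (jac2 w z + Matrix.transpose (jac2 w z))

/-- The traction `σ(w)·ν` with unit normal `ν` (identified with a vector in `ℝ²`),
itself identified with a complex number. -/
noncomputable def traction2 (lam mu : ℝ) (w : ℂ → ℂ) (z ν : ℂ) : ℂ :=
  ⟨stress2 lam mu w z 0 0 * ν.re + stress2 lam mu w z 0 1 * ν.im,
   stress2 lam mu w z 1 0 * ν.re + stress2 lam mu w z 1 1 * ν.im⟩

lemma hW (n : ℕ) (w : ℂ → ℂ)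
    (hw : ∀ z : ℂ, z ≠ 0 → w z = ((starRingEnd ℂ) z) ^ (-((n : ℤ) + 1)))
    (z : ℂ) (hz : z ≠ 0) :
    HasFDerivAt w
      (Complex.conjCLE.toContinuousLinearMap.comp
        ((ContinuousLinearMap.smulRight (1 : ℂ →L[ℂ] ℂ)
          ((-((n:ℤ)+1) : ℂ) * z ^ (-((n:ℤ)+1) - 1))).restrictScalars ℝ)) z := by
  have hf : HasDerivAt (fun y : ℂ => y ^ (-((n:ℤ)+1)))
      (((-((n:ℤ)+1) : ℂ)) * z ^ (-((n:ℤ)+1) - 1)) z := by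
    simpa using hasDerivAt_zpow (-((n:ℤ)+1)) z (Or.inl hz)
  have hF : HasFDerivAt (fun y : ℂ => (starRingEnd ℂ) (y ^ (-((n:ℤ)+1))))
      (Complex.conjCLE.toContinuousLinearMap.comp
        ((ContinuousLinearMap.smulRight (1 : ℂ →L[ℂ] ℂ)
          ((-((n:ℤ)+1) : ℂ) * z ^ (-((n:ℤ)+1) - 1))).restrictScalars ℝ)) z := by
    exact (Complex.conjCLE.toContinuousLinearMap.hasFDerivAt).comp z
      (hf.hasFDerivAt.restrictScalars ℝ)
  apply hF.congr_of_eventuallyEq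
  filter_upwards [isOpen_compl_singleton.mem_nhds hz] with y hy
  rw [hw y hy, map_zpow₀]

lemma entries (n : ℕ) (w : ℂ → ℂ)
    (hw : ∀ z : ℂ, z ≠ 0 → w z = ((starRingEnd ℂ) z) ^ (-((n : ℤ) + 1)))
    (z : ℂ) (hz : z ≠ 0) :
    pdx (fun y => (w y).re) z = ((-((n:ℤ)+1) : ℂ) * z ^ (-((n:ℤ)+1) - 1)).re ∧
    pdy (fun y => (w y).re) z = -((-((n:ℤ)+1) : ℂ) * z ^ (-((n:ℤ)+1) - 1)).im ∧
    pdx (fun y => (w y).im) z = -((-((n:ℤ)+1) : ℂ) * z ^ (-((n:ℤ)+1) - 1)).im ∧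
    pdy (fun y => (w y).im) z = -((-((n:ℤ)+1) : ℂ) * z ^ (-((n:ℤ)+1) - 1)).re := by
  have h := hW n w hw z hz
  have hre : fderiv ℝ (fun y => (w y).re) z = Complex.reCLM.comp
      (Complex.conjCLE.toContinuousLinearMap.comp
        ((ContinuousLinearMap.smulRight (1 : ℂ →L[ℂ] ℂ)
          ((-((n:ℤ)+1) : ℂ) * z ^ (-((n:ℤ)+1) - 1))).restrictScalars ℝ)) :=
    ((Complex.reCLM.hasFDerivAt.comp z h) :
      HasFDerivAt (fun y => (w y).re) _ z).fderiv
  have him : fderiv ℝ (fun y => (w y).im) z = Complex.imCLM.comp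
      (Complex.conjCLE.toContinuousLinearMap.comp
        ((ContinuousLinearMap.smulRight (1 : ℂ →L[ℂ] ℂ)
          ((-((n:ℤ)+1) : ℂ) * z ^ (-((n:ℤ)+1) - 1))).restrictScalars ℝ)) :=
    ((Complex.imCLM.hasFDerivAt.comp z h) :
      HasFDerivAt (fun y => (w y).im) _ z).fderiv
  refine ⟨?_, ?_, ?_, ?_⟩ <;>
  · simp only [pdx, pdy, hre, him, ContinuousLinearMap.comp_apply,
      ContinuousLinearMap.coe_restrictScalars', ContinuousLinearMap.smulRight_apply,
      ContinuousLinearMap.one_apply, ContinuousLinearEquiv.coe_coe, Complex.conjCLE_apply,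
      Complex.reCLM_apply, Complex.imCLM_apply, Complex.conj_re, Complex.conj_im,
      smul_eq_mul, Complex.mul_re, Complex.mul_im, Complex.one_re, Complex.one_im,
      Complex.I_re, Complex.I_im]
    ring

theorem DtN_antiholomorphic_mode (n : ℕ) (R : ℝ) (hR : 0 < R) (lam mu : ℝ)
    (w : ℂ → ℂ) (hw : ∀ z : ℂ, z ≠ 0 → w z = ((starRingEnd ℂ) z) ^ (-((n : ℤ) + 1))) :
    (∀ z : ℂ, z ≠ 0 → div2 w z = 0) ∧
    (∀ z : ℂ, ‖z‖ = R →
      traction2 lam mu w z (z / R) = ((-(2 * mu / R) * ((n : ℝ) + 1) : ℝ) : ℂ) * w z) := by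
  constructor
  · intro z hz
    obtain ⟨e1, e2, e3, e4⟩ := entries n w hw z hz
    simp [div2, e1, e4]
  · intro z hzR
    have hz : z ≠ 0 := by
      intro h; rw [h] at hzR; simp at hzR; exact hR.ne' hzR.symm
    have hRne : (R : ℂ) ≠ 0 := by exact_mod_cast hR.ne'
    obtain ⟨e1, e2, e3, e4⟩ := entries n w hw z hz
    set a : ℂ := (-((n:ℤ)+1) : ℂ) * z ^ (-((n:ℤ)+1) - 1) with ha
    have hdiv : div2 w z = 0 := by simp [div2, e1, e4]
    have t1 : traction2 lam mu w z (z / R) =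
        ((2 * mu : ℝ) : ℂ) * (starRingEnd ℂ) (a * (z / R)) := by
      apply Complex.ext <;>
      · simp only [traction2, stress2, jac2, hdiv, div2, e1, e2, e3, e4,
          Matrix.add_apply, Matrix.smul_apply, Matrix.transpose_apply, Matrix.of_apply,
          Matrix.cons_val', Matrix.cons_val_zero, Matrix.cons_val_one, Matrix.head_cons,
          Matrix.head_fin_const, Matrix.empty_val', Matrix.cons_val_fin_one,
          Matrix.one_apply_eq, Matrix.one_apply_ne, smul_eq_mul,
          Complex.mul_re, Complex.mul_im, Complex.conj_re, Complex.conj_im,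
          Complex.ofReal_re, Complex.ofReal_im, mul_zero, zero_mul]
        ring
    have haz : a * z = (-((n:ℂ)+1)) * z ^ (-((n:ℤ)+1)) := by
      rw [ha, zpow_sub_one₀ hz]
      field_simp
      push_cast
      rfl
    have key : (starRingEnd ℂ) (a * (z / R)) =
        (-((n:ℂ)+1) / R) * ((starRingEnd ℂ) z) ^ (-((n:ℤ)+1)) := by
      rw [mul_div_assoc', haz, map_div₀, map_mul, map_zpow₀]
      simp [Complex.conj_ofReal]
      ring
    rw [t1, key, hw z hz]
    push_cast
    field_simp
end
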